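/- Let K be a field, n ≥ 2, and regard K^n as a left module over the matrix algebra M_n(K) via the standard action. Let N be a K-subspace of K^n with N ≠ 0 and N ≠ K^n. Then σ(N) = {0} and τ(N) = {0}. -/

import Mathlib

/-- `J` is a (two-sided) Mathieu subspace of the `K`-algebra `A`. -/
def IsMathieuSubspace {K A : Type*} [Field K] [Ring A] [Algebra K A]
    (J : Submodule K A) : Prop :=
  ∀ a : A, (∀ m : ℕ, 1 ≤ m → a ^ m ∈ J) →
    ∀ b c : A, ∃ N : ℕ, 1 ≤ N ∧ ∀ m : ℕ, N ≤ m → b * a ^ m * c ∈ J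

/-- A `K`-subspace `J` of `A` is a two-sided ideal of `A` if it absorbs
multiplication on both sides. -/
def IsTwoSidedIdealSubspace {K A : Type*} [Field K] [Ring A] [Algebra K A]
    (J : Submodule K A) : Prop :=
  ∀ a ∈ J, ∀ b : A, b * a ∈ J ∧ a * b ∈ J

variable {K : Type*} [Field K] {n : ℕ}

/-- For `u ∈ Kⁿ` and a `K`-subspace `N` of `Kⁿ`, the `K`-subspace
`(N : u) = {X ∈ Mₙ(K) | X • u ∈ N}` of `Mₙ(K)`, where matrices act on `Kⁿ`
in the standard way. -/
def matColon (N : Submodule K (Fin n → K)) (u : Fin n → K) :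
    Submodule K (Matrix (Fin n) (Fin n) K) where
  carrier := {X : Matrix (Fin n) (Fin n) K | X.mulVec u ∈ N}
  add_mem' := by
    intro a b ha hb
    simp only [Set.mem_setOf_eq, Matrix.add_mulVec] at *
    exact N.add_mem ha hb
  zero_mem' := by
    simp only [Set.mem_setOf_eq, Matrix.zero_mulVec]
    exact N.zero_mem
  smul_mem' := by
    intro c X hX
    simp only [Set.mem_setOf_eq] at *
    rw [Matrix.smul_mulVec]
    exact N.smul_mem c hX

/-- The set of stable elements of `N ⊆ Kⁿ`. -/
def matSigmaSet (N : Submodule K (Fin n → K)) : Set (Fin n → K) :=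
  {u | IsTwoSidedIdealSubspace (matColon N u)}

/-- The set of quasi-stable elements of `N ⊆ Kⁿ`. -/
def matTauSet (N : Submodule K (Fin n → K)) : Set (Fin n → K) :=
  {u | IsMathieuSubspace (matColon N u)}

open Matrix in
lemma vecMulVec_mulVec' (w f v : Fin n → K) :
    (Matrix.vecMulVec w f).mulVec v = (f ⬝ᵥ v) • w := by
  ext i
  simp only [Matrix.mulVec, Matrix.vecMulVec_apply, dotProduct, Pi.smul_apply,
    smul_eq_mul, Finset.sum_mul, Finset.mul_sum]
  exact Finset.sum_congr rfl fun j _ => by ring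

open Matrix in
lemma exists_dual_ne_zero (u w : Fin n → K) (hu : u ≠ 0) (hw : w ≠ 0) :
    ∃ h : Fin n → K, h ⬝ᵥ u ≠ 0 ∧ h ⬝ᵥ w ≠ 0 := by
  obtain ⟨i, hi⟩ : ∃ i, u i ≠ 0 := by
    by_contra hc; push_neg at hc; exact hu (funext hc)
  obtain ⟨j, hj⟩ : ∃ j, w j ≠ 0 := by
    by_contra hc; push_neg at hc; exact hw (funext hc)
  by_cases hwi : w i ≠ 0
  · exact ⟨Pi.single i 1, by simpa [single_dotProduct] using hi,
      by simpa [single_dotProduct] using hwi⟩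
  by_cases huj : u j ≠ 0
  · exact ⟨Pi.single j 1, by simpa [single_dotProduct] using huj,
      by simpa [single_dotProduct] using hj⟩
  push_neg at hwi huj
  have hij : i ≠ j := fun h => hi (h ▸ huj)
  refine ⟨Pi.single i 1 + Pi.single j 1, ?_, ?_⟩
  · simp [add_dotProduct, single_dotProduct, huj, hi]
  · simp [add_dotProduct, single_dotProduct, hwi, hj]

open Matrix in
/-- If `u ∉ N` and `N ≠ ⊥`, then `(N : u)` is not a Mathieu subspace. -/
lemma not_mathieu_of_not_mem (N : Submodule K (Fin n → K)) (u : Fin n → K)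
    (huN : u ∉ N) (hN0 : N ≠ ⊥) : ¬ IsMathieuSubspace (matColon N u) := by
  obtain ⟨w, hwN, hw0⟩ : ∃ w ∈ N, w ≠ 0 := by
    by_contra hc; push_neg at hc
    exact hN0 (le_bot_iff.mp fun x hx => by simpa using hc x hx)
  have hu0 : u ≠ 0 := fun h => huN (h ▸ N.zero_mem)
  obtain ⟨h, hα, hβ⟩ := exists_dual_ne_zero u w hu0 hw0
  set α := h ⬝ᵥ u with hαdef
  set β := h ⬝ᵥ w with hβdef
  set γ := α⁻¹ * β with hγdef
  have hγ0 : γ ≠ 0 := mul_ne_zero (inv_ne_zero hα) hβ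
  set a : Matrix (Fin n) (Fin n) K := Matrix.vecMulVec w (α⁻¹ • h) with ha
  set b : Matrix (Fin n) (Fin n) K := Matrix.vecMulVec u (β⁻¹ • h) with hb
  have hau : a.mulVec u = w := by
    rw [ha, vecMulVec_mulVec', smul_dotProduct, ← hαdef, smul_eq_mul,
      inv_mul_cancel₀ hα, one_smul]
  have haw : a.mulVec w = γ • w := by
    rw [ha, vecMulVec_mulVec', smul_dotProduct, ← hβdef, smul_eq_mul, hγdef]
  have hbw : b.mulVec w = u := by
    rw [hb, vecMulVec_mulVec', smul_dotProduct, ← hβdef, smul_eq_mul,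
      inv_mul_cancel₀ hβ, one_smul]
  have hpow : ∀ m : ℕ, (a ^ (m + 1)).mulVec u = γ ^ m • w := by
    intro m
    induction m with
    | zero => simpa using hau
    | succ k ih =>
      rw [pow_succ' a (k + 1), ← Matrix.mulVec_mulVec, ih, Matrix.mulVec_smul, haw,
        smul_smul, ← pow_succ]
  intro hM
  have hapow : ∀ m : ℕ, 1 ≤ m → a ^ m ∈ matColon N u := by
    intro m hm
    obtain ⟨k, rfl⟩ := Nat.exists_eq_add_of_le hm
    show (a ^ (1 + k)).mulVec u ∈ N
    rw [add_comm, hpow]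
    exact N.smul_mem _ hwN
  obtain ⟨M, hM1, hMall⟩ := hM a hapow b 1
  have hmem := hMall M le_rfl
  have : (b * a ^ M * 1).mulVec u ∈ N := hmem
  rw [mul_one, ← Matrix.mulVec_mulVec] at this
  obtain ⟨k, rfl⟩ := Nat.exists_eq_add_of_le hM1
  rw [add_comm, hpow, Matrix.mulVec_smul, hbw] at this
  exact huN (by simpa [smul_smul, inv_mul_cancel₀ (pow_ne_zero k hγ0)] using N.smul_mem ((γ ^ k)⁻¹) this)

open Matrix in
/-- If `u ∈ N`, `u ≠ 0` and `N ≠ ⊤`, then `(N : u)` is not a Mathieu subspace. -/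
lemma not_mathieu_of_mem (N : Submodule K (Fin n → K)) (u : Fin n → K)
    (huN : u ∈ N) (hu0 : u ≠ 0) (hNtop : N ≠ ⊤) : ¬ IsMathieuSubspace (matColon N u) := by
  obtain ⟨v, hvN⟩ : ∃ v, v ∉ N := by
    by_contra hc; push_neg at hc
    exact hNtop (eq_top_iff.mpr fun x _ => hc x)
  have hv0 : v ≠ 0 := fun h => hvN (h ▸ N.zero_mem)
  obtain ⟨h, hα, -⟩ := exists_dual_ne_zero u v hu0 hv0
  set α := h ⬝ᵥ u with hαdef
  set b : Matrix (Fin n) (Fin n) K := Matrix.vecMulVec v (α⁻¹ • h) with hb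
  have hbu : b.mulVec u = v := by
    rw [hb, vecMulVec_mulVec', smul_dotProduct, ← hαdef, smul_eq_mul,
      inv_mul_cancel₀ hα, one_smul]
  intro hM
  have hone : ∀ m : ℕ, 1 ≤ m → (1 : Matrix (Fin n) (Fin n) K) ^ m ∈ matColon N u := by
    intro m _
    show ((1 : Matrix (Fin n) (Fin n) K) ^ m).mulVec u ∈ N
    simp [Matrix.one_mulVec, huN]
  obtain ⟨M, hM1, hMall⟩ := hM 1 hone b 1
  have hmem := hMall M le_rfl
  have : (b * 1 ^ M * 1).mulVec u ∈ N := hmem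
  rw [one_pow, mul_one, mul_one, hbu] at this
  exact hvN this

lemma ideal_implies_mathieu {A : Type*} [Ring A] [Algebra K A] (J : Submodule K A)
    (hJ : IsTwoSidedIdealSubspace J) : IsMathieuSubspace J := by
  intro a ha b c
  refine ⟨1, le_rfl, fun m hm => ?_⟩
  exact ((hJ _ (((hJ _ (ha m hm)) b).1) c).2)

theorem stmt16 (hn : 2 ≤ n) (N : Submodule K (Fin n → K))
    (hN0 : N ≠ ⊥) (hNtop : N ≠ ⊤) :
    matSigmaSet N = {0} ∧ matTauSet N = {0} := by
  have htau : matTauSet N = {0} := by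
    ext u
    simp only [matTauSet, Set.mem_setOf_eq, Set.mem_singleton_iff]
    constructor
    · intro hM
      by_contra hu0
      by_cases huN : u ∈ N
      · exact not_mathieu_of_mem N u huN hu0 hNtop hM
      · exact not_mathieu_of_not_mem N u huN hN0 hM
    · rintro rfl
      intro a ha b c
      refine ⟨1, le_rfl, fun m _ => ?_⟩
      show (b * a ^ m * c).mulVec 0 ∈ N
      simp [Matrix.mulVec_zero]
  constructor
  · ext u
    simp only [matSigmaSet, Set.mem_setOf_eq, Set.mem_singleton_iff]
    constructor
    · intro hI
      have : u ∈ matTauSet N := ideal_implies_mathieu _ hI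
      rwa [htau, Set.mem_singleton_iff] at this
    · rintro rfl
      intro a _ b
      constructor <;> · show Matrix.mulVec _ 0 ∈ N; simp [Matrix.mulVec_zero]
  · exact htau
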